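/- Let T_n be the Chung–Feller sojourn time of the Bernoulli(p) random walk. For even integers k, n with 0 ≤ k ≤ n, P(T_n = k) = P(T_k = k) · P(T_{n−k} = 0). -/

import Mathlib

open MeasureTheory ProbabilityTheory Finset

namespace CF

/-- step value of a boolean step -/
def stp (b : Bool) : ℤ := if b then 1 else -1

/-- weight of a boolean step -/
def wB (p : ℝ) (b : Bool) : ℝ := if b then p else 1 - p

/-- final height of a path -/
def ht (l : List Bool) : ℤ := (l.map stp).sum

/-- height after j steps -/
def SL (l : List Bool) (j : ℕ) : ℤ := ht (l.take j)

/-- weight of a path -/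
def wt (p : ℝ) (l : List Bool) : ℝ := (l.map (wB p)).prod

/-- step j is above the axis -/
def abv (l : List Bool) (j : ℕ) : Prop :=
  0 < SL l j ∨ (SL l j = 0 ∧ 0 < SL l (j - 1))

instance (l : List Bool) (j : ℕ) : Decidable (abv l j) := by
  unfold abv; infer_instance

/-- sojourn time of a path -/
def TL (l : List Bool) : ℕ := ∑ j ∈ Icc 1 l.length, if abv l j then 1 else 0

def nnL (l : List Bool) : Prop := ∀ j ∈ Icc 1 l.length, 0 ≤ SL l j
def npL (l : List Bool) : Prop := ∀ j ∈ Icc 1 l.length, SL l j ≤ 0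
def posL (l : List Bool) : Prop := ∀ j ∈ Icc 1 l.length, 1 ≤ SL l j
def negL (l : List Bool) : Prop := ∀ j ∈ Icc 1 l.length, SL l j ≤ -1

/-- excursion : returns to `0` exactly at the end -/
def excL (l : List Bool) : Prop :=
  ht l = 0 ∧ ∀ j ∈ Ico 1 l.length, SL l j ≠ 0

instance (l : List Bool) : Decidable (nnL l) := by unfold nnL; infer_instance
instance (l : List Bool) : Decidable (npL l) := by unfold npL; infer_instance
instance (l : List Bool) : Decidable (posL l) := by unfold posL; infer_instance
instance (l : List Bool) : Decidable (negL l) := by unfold negL; infer_instance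
instance (l : List Bool) : Decidable (excL l) := by unfold excL; infer_instance

/-- all paths of length n -/
def L (n : ℕ) : Finset (List Bool) := (Finset.univ : Finset (Fin n → Bool)).image List.ofFn

def A (p : ℝ) (n k : ℕ) : ℝ := ∑ l ∈ L n, if TL l = k then wt p l else 0
def PP (p : ℝ) (k : ℕ) : ℝ := ∑ l ∈ L k, if nnL l then wt p l else 0
def NN (p : ℝ) (m : ℕ) : ℝ := ∑ l ∈ L m, if npL l then wt p l else 0
def Ep (p : ℝ) (r : ℕ) : ℝ := ∑ l ∈ L r, if excL l ∧ nnL l then wt p l else 0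
def En (p : ℝ) (r : ℕ) : ℝ := ∑ l ∈ L r, if excL l ∧ npL l then wt p l else 0

lemma mem_L {n : ℕ} {l : List Bool} : l ∈ L n ↔ l.length = n := by
  constructor
  · intro h
    rcases Finset.mem_image.1 h with ⟨f, _, rfl⟩
    simp
  · intro h
    subst h
    exact Finset.mem_image.2 ⟨l.get, Finset.mem_univ _, List.ofFn_get l⟩

lemma SL_zero (l : List Bool) : SL l 0 = 0 := by simp [SL, ht]

lemma SL_len (l : List Bool) : SL l l.length = ht l := by simp [SL]

lemma SL_of_le {l : List Bool} {j : ℕ} (h : l.length ≤ j) : SL l j = ht l := by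
  simp [SL, List.take_of_length_le h]

lemma ht_append (a b : List Bool) : ht (a ++ b) = ht a + ht b := by
  simp [ht]

lemma SL_append_left {e : List Bool} (m : List Bool) {j : ℕ} (h : j ≤ e.length) :
    SL (e ++ m) j = SL e j := by
  unfold SL
  rw [List.take_append]
  simp [Nat.sub_eq_zero_of_le h]

lemma SL_append_right (e m : List Bool) (j : ℕ) :
    SL (e ++ m) (e.length + j) = ht e + SL m j := by
  unfold SL
  rw [List.take_append]
  rw [List.take_of_length_le (by omega), ht_append]
  have h2 : e.length + j - e.length = j := by omega
  rw [h2]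

lemma wt_append (p : ℝ) (a b : List Bool) : wt p (a ++ b) = wt p a * wt p b := by
  simp [wt]

/-- step relation -/
lemma SL_succ (l : List Bool) {j : ℕ} (h : j < l.length) :
    SL l (j + 1) = SL l j + stp (l.get ⟨j, h⟩) := by
  unfold SL
  rw [List.take_succ]
  have h0 : l[j]? = some (l.get ⟨j, h⟩) := by
    simp [List.getElem?_eq_getElem h]
  rw [h0]
  show ht (List.take j l ++ [l.get ⟨j, h⟩]) = _
  rw [ht_append]
  simp [ht]

lemma SL_step {l : List Bool} {j : ℕ} (h1 : 1 ≤ j) (h2 : j ≤ l.length) :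
    SL l j = SL l (j - 1) + 1 ∨ SL l j = SL l (j - 1) - 1 := by
  obtain ⟨i, rfl⟩ : ∃ i, j = i + 1 := ⟨j - 1, by omega⟩
  have := SL_succ l (show i < l.length by omega)
  rcases Bool.eq_false_or_eq_true (l.get ⟨i, by omega⟩) with hb | hb <;>
    rw [hb] at this <;> simp [stp] at this <;> simp [this] <;> omega

lemma SL_parity (l : List Bool) {j : ℕ} (h : j ≤ l.length) : Even (SL l j + j) := by
  induction j with
  | zero => simp [SL_zero]
  | succ i ih =>
    have hstep := SL_step (Nat.succ_le_succ (Nat.zero_le i)) h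
    have hi := ih (by omega)
    simp only [Nat.add_sub_cancel, Nat.succ_sub_one] at hstep ⊢
    rcases hi with ⟨c, hc⟩
    rcases hstep with hs | hs
    · exact ⟨c + 1, by push_cast; push_cast at hc; rw [hs]; linarith⟩
    · exact ⟨c, by push_cast; push_cast at hc; rw [hs]; linarith⟩


lemma sum_split (r s : ℕ) (f : List Bool → ℝ) :
    ∑ l ∈ L (r + s), f l = ∑ e ∈ L r, ∑ m ∈ L s, f (e ++ m) := by
  rw [← Finset.sum_product']
  apply Finset.sum_nbij' (i := fun l => (l.take r, l.drop r))
    (j := fun em => em.1 ++ em.2)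
  · intro l hl
    rw [mem_L] at hl
    refine Finset.mem_product.2 ⟨mem_L.2 ?_, mem_L.2 ?_⟩
    · rw [List.length_take]; omega
    · rw [List.length_drop]; omega
  · intro em hem
    rw [Finset.mem_product, mem_L, mem_L] at hem
    rw [mem_L, List.length_append]; omega
  · intro l _
    exact List.take_append_drop r l
  · intro em hem
    rw [Finset.mem_product, mem_L, mem_L] at hem
    obtain ⟨h1, h2⟩ := hem
    simp [List.take_append, List.drop_append, h1,
      List.take_of_length_le (le_of_eq h1), List.drop_of_length_le (le_of_eq h1)]
  · intro l _
    simp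

lemma L_zero : L 0 = {([] : List Bool)} := by
  ext l
  rw [mem_L]
  simp [List.length_eq_zero_iff]

lemma L_one : L 1 = ({[true], [false]} : Finset (List Bool)) := by
  ext l
  rw [mem_L]
  constructor
  · intro h
    rcases l with _ | ⟨b, l⟩
    · simp at h
    · simp at h
      subst h
      rcases b <;> simp
  · intro h
    rcases Finset.mem_insert.1 h with h | h
    · subst h; rfl
    · rw [Finset.mem_singleton] at h; subst h; rfl

lemma sum_L_one (f : List Bool → ℝ) :
    ∑ e ∈ L 1, f e = f [true] + f [false] := by
  rw [L_one]
  rw [Finset.sum_insert (by simp), Finset.sum_singleton]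

lemma SL_one {l : List Bool} (h : 1 ≤ l.length) : SL l 1 = 1 ∨ SL l 1 = -1 := by
  have := SL_step (le_refl 1) h
  simp [SL_zero] at this
  exact this

/-- sign persistence: no zeros up to J and positive at 1 implies positive up to J -/
lemma pos_of_no_zero {l : List Bool} {J : ℕ} (hJ : J ≤ l.length)
    (h0 : ∀ j, 1 ≤ j → j ≤ J → SL l j ≠ 0) (h1 : 0 < SL l 1) :
    ∀ j, 1 ≤ j → j ≤ J → 0 < SL l j := by
  intro j hj1 hjJ
  induction j with
  | zero => omega
  | succ i ih =>
    rcases Nat.eq_or_lt_of_le hj1 with h | h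
    · simpa [← h] using h1
    · have hi : 0 < SL l i := ih (by omega) (by omega)
      have hstep := SL_step (show 1 ≤ i + 1 by omega) (by omega : i + 1 ≤ l.length)
      simp only [Nat.add_sub_cancel] at hstep
      have hne := h0 (i+1) (by omega) hjJ
      omega

lemma neg_of_no_zero {l : List Bool} {J : ℕ} (hJ : J ≤ l.length)
    (h0 : ∀ j, 1 ≤ j → j ≤ J → SL l j ≠ 0) (h1 : SL l 1 < 0) :
    ∀ j, 1 ≤ j → j ≤ J → SL l j < 0 := by
  intro j hj1 hjJ
  induction j with
  | zero => omega
  | succ i ih =>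
    rcases Nat.eq_or_lt_of_le hj1 with h | h
    · simpa [← h] using h1
    · have hi : SL l i < 0 := ih (by omega) (by omega)
      have hstep := SL_step (show 1 ≤ i + 1 by omega) (by omega : i + 1 ≤ l.length)
      simp only [Nat.add_sub_cancel] at hstep
      have hne := h0 (i+1) (by omega) hjJ
      omega

lemma TL_le (l : List Bool) : TL l ≤ l.length := by
  unfold TL
  calc ∑ j ∈ Icc 1 l.length, (if abv l j then 1 else 0)
      ≤ ∑ j ∈ Icc 1 l.length, 1 := Finset.sum_le_sum (by intro j _; split <;> omega)
    _ = l.length := by simp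

lemma TL_eq_len_iff (l : List Bool) : TL l = l.length ↔ nnL l := by
  constructor
  · intro h
    have hall : ∀ j ∈ Icc 1 l.length, abv l j := by
      by_contra hc
      push_neg at hc
      obtain ⟨j0, hj0, hnabv⟩ := hc
      have : TL l < l.length := by
        unfold TL
        calc ∑ j ∈ Icc 1 l.length, (if abv l j then 1 else 0)
            < ∑ j ∈ Icc 1 l.length, 1 := by
              apply Finset.sum_lt_sum (by intro j _; split <;> omega) ⟨j0, hj0, by simp [hnabv]⟩
          _ = l.length := by simp
      omega
    intro j hj
    rcases hall j hj with h1 | h2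
    · exact le_of_lt h1
    · exact le_of_eq h2.1.symm
  · intro hnn
    have hall : ∀ j ∈ Icc 1 l.length, abv l j := by
      intro j hj
      rw [Finset.mem_Icc] at hj
      have hstep := SL_step hj.1 hj.2
      have hj' := hnn j (Finset.mem_Icc.2 hj)
      rcases lt_or_eq_of_le hj' with h1 | h2
      · exact Or.inl h1
      · refine Or.inr ⟨h2.symm, ?_⟩
        rcases Nat.eq_or_lt_of_le hj.1 with hh | hh
        · exfalso
          rcases SL_one (by omega : 1 ≤ l.length) with hx | hx <;> rw [← hh] at h2 <;> omega
        · have := hnn (j-1) (Finset.mem_Icc.2 ⟨by omega, by omega⟩)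
          omega
    unfold TL
    calc ∑ j ∈ Icc 1 l.length, (if abv l j then 1 else 0)
        = ∑ j ∈ Icc 1 l.length, 1 := Finset.sum_congr rfl (fun j hj => by simp [hall j hj])
      _ = l.length := by simp

lemma TL_eq_zero_iff (l : List Bool) : TL l = 0 ↔ npL l := by
  unfold TL
  rw [Finset.sum_eq_zero_iff]
  constructor
  · intro h j hj
    have := h j hj
    by_contra hc
    push_neg at hc
    simp [abv, Or.inl hc] at this
  · intro hnp j hj
    rw [Finset.mem_Icc] at hj
    have h1 := hnp j (Finset.mem_Icc.2 hj)
    have : ¬ abv l j := by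
      rintro (h2 | ⟨h2, h3⟩)
      · omega
      · rcases Nat.eq_or_lt_of_le hj.1 with hh | hh
        · rw [← hh] at h3; simp [SL_zero] at h3
        · have := hnp (j-1) (Finset.mem_Icc.2 ⟨by omega, by omega⟩)
          omega
    simp [this]

lemma abv_append_left {e m : List Bool} {j : ℕ} (h1 : 1 ≤ j) (h2 : j ≤ e.length) :
    abv (e ++ m) j ↔ abv e j := by
  unfold abv
  rw [SL_append_left m h2, SL_append_left m (by omega)]

lemma abv_append_right {e m : List Bool} (he : ht e = 0) {j : ℕ} (h1 : 1 ≤ j) :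
    abv (e ++ m) (e.length + j) ↔ abv m j := by
  unfold abv
  have ha := SL_append_right e m j
  have hb := SL_append_right e m (j - 1)
  rw [he, zero_add] at ha hb
  rw [ha]
  have : e.length + j - 1 = e.length + (j - 1) := by omega
  rw [this, hb]

lemma TL_append {e m : List Bool} (he : ht e = 0) :
    TL (e ++ m) = TL e + TL m := by
  unfold TL
  rw [List.length_append]
  have h1 : Icc 1 (e.length + m.length) = Ioc 0 (e.length + m.length) := by
    rw [← Finset.Icc_add_one_left_eq_Ioc]; rfl
  have h2 : Icc 1 e.length = Ioc 0 e.length := by rw [← Finset.Icc_add_one_left_eq_Ioc]; rfl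
  rw [h1, h2, ← Finset.sum_Ioc_consecutive _ (Nat.zero_le e.length) (Nat.le_add_right _ _)]
  congr 1
  · apply Finset.sum_congr rfl
    intro j hj
    rw [Finset.mem_Ioc] at hj
    exact if_congr (abv_append_left hj.1 hj.2) rfl rfl
  · rw [show Icc 1 m.length = Ioc 0 m.length from by rw [← Finset.Icc_add_one_left_eq_Ioc]; rfl]
    apply Finset.sum_nbij' (i := fun j => j - e.length) (j := fun j => e.length + j)
    · intro j hj
      rw [Finset.mem_Ioc] at hj ⊢
      omega
    · intro j hj
      rw [Finset.mem_Ioc] at hj ⊢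
      omega
    · intro j hj
      rw [Finset.mem_Ioc] at hj
      omega
    · intro j hj
      rw [Finset.mem_Ioc] at hj
      omega
    · intro j hj
      rw [Finset.mem_Ioc] at hj
      have hj1 : 1 ≤ j - e.length := by omega
      have := abv_append_right he (m := m) hj1
      rw [show e.length + (j - e.length) = j from by omega] at this
      exact if_congr this rfl rfl


lemma nnL_append {e m : List Bool} (he : ht e = 0) :
    nnL (e ++ m) ↔ nnL e ∧ nnL m := by
  constructor
  · intro h
    constructor
    · intro j hj
      rw [Finset.mem_Icc] at hj
      have := h j (Finset.mem_Icc.2 ⟨hj.1, by rw [List.length_append]; omega⟩)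
      rwa [SL_append_left m hj.2] at this
    · intro j hj
      rw [Finset.mem_Icc] at hj
      have := h (e.length + j) (Finset.mem_Icc.2 ⟨by omega, by rw [List.length_append]; omega⟩)
      rwa [SL_append_right, he, zero_add] at this
  · rintro ⟨h1, h2⟩ j hj
    rw [Finset.mem_Icc, List.length_append] at hj
    rcases le_or_gt j e.length with hc | hc
    · rw [SL_append_left m hc]
      exact h1 j (Finset.mem_Icc.2 ⟨hj.1, hc⟩)
    · rw [show j = e.length + (j - e.length) from by omega, SL_append_right, he, zero_add]
      exact h2 (j - e.length) (Finset.mem_Icc.2 ⟨by omega, by omega⟩)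

lemma nnL_snoc (l : List Bool) (b : Bool) :
    nnL (l ++ [b]) ↔ nnL l ∧ 0 ≤ ht l + stp b := by
  constructor
  · intro h
    constructor
    · intro j hj
      rw [Finset.mem_Icc] at hj
      have := h j (Finset.mem_Icc.2 ⟨hj.1, by rw [List.length_append]; omega⟩)
      rwa [SL_append_left _ hj.2] at this
    · have := h (l.length + 1) (Finset.mem_Icc.2 ⟨by omega, by rw [List.length_append]; simp⟩)
      rwa [SL_append_right, show SL [b] 1 = stp b from by simp [SL, ht]] at this
  · rintro ⟨h1, h2⟩ j hj
    rw [Finset.mem_Icc, List.length_append] at hj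
    rcases le_or_gt j l.length with hc | hc
    · rw [SL_append_left _ hc]
      exact h1 j (Finset.mem_Icc.2 ⟨hj.1, hc⟩)
    · have hj' : j = l.length + 1 := by simp at hj; omega
      subst hj'
      rwa [SL_append_right, show SL [b] 1 = stp b from by simp [SL, ht]]

lemma SL_cons (b : Bool) (m : List Bool) (j : ℕ) :
    SL (b :: m) (j + 1) = stp b + SL m j := by
  have h := SL_append_right [b] m j
  simp only [List.singleton_append, List.length_singleton] at h
  rw [show (1 : ℕ) + j = j + 1 from by omega] at h
  rw [h]
  simp [ht]

lemma posL_cons (b : Bool) (m : List Bool) :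
    posL (b :: m) ↔ b = true ∧ nnL m := by
  constructor
  · intro h
    have h1 := h 1 (Finset.mem_Icc.2 ⟨le_refl 1, by simp⟩)
    rw [show (1:ℕ) = 0 + 1 from rfl, SL_cons, SL_zero, add_zero] at h1
    have hb : b = true := by rcases b with _ | _ <;> simp [stp] at h1 ⊢
    refine ⟨hb, ?_⟩
    intro j hj
    rw [Finset.mem_Icc] at hj
    have := h (j + 1) (Finset.mem_Icc.2 ⟨by omega, by simp; omega⟩)
    rw [SL_cons, hb] at this
    simp [stp] at this
    omega
  · rintro ⟨hb, hnn⟩ j hj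
    subst hb
    rw [Finset.mem_Icc] at hj
    obtain ⟨j', rfl⟩ : ∃ j', j = j' + 1 := ⟨j - 1, by omega⟩
    rw [SL_cons]
    simp only [stp, if_true]
    rcases Nat.eq_zero_or_pos j' with h0 | h0
    · subst h0; simp [SL_zero]
    · have := hnn j' (Finset.mem_Icc.2 ⟨h0, by simp at hj; omega⟩)
      omega


/-! ### Reflection -/

def flip (l : List Bool) : List Bool := l.map not

@[simp] lemma flip_flip (l : List Bool) : flip (flip l) = l := by
  unfold flip
  rw [List.map_map]
  have : (not ∘ not) = id := by funext b; simp
  rw [this, List.map_id]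

@[simp] lemma flip_length (l : List Bool) : (flip l).length = l.length := by simp [flip]

lemma ht_flip (l : List Bool) : ht (flip l) = - ht l := by
  induction l with
  | nil => simp [flip, ht]
  | cons b l ih =>
    simp only [flip, List.map_cons, ht, List.sum_cons] at ih ⊢
    rcases b <;> simp [stp] at ih ⊢ <;> omega

lemma SL_flip (l : List Bool) (j : ℕ) : SL (flip l) j = - SL l j := by
  unfold SL
  rw [show (flip l).take j = flip (l.take j) from by simp [flip, List.map_take], ht_flip]

lemma wt_flip (p : ℝ) (l : List Bool) : wt p (flip l) = wt (1 - p) l := by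
  induction l with
  | nil => simp [flip, wt]
  | cons b l ih =>
    have h1 : wt p (flip (b :: l)) = wB p (!b) * wt p (flip l) := by simp [flip, wt]
    have h2 : wt (1 - p) (b :: l) = wB (1 - p) b * wt (1 - p) l := by simp [wt]
    rw [h1, h2, ih]
    rcases b <;> unfold wB <;> norm_num <;> ring

lemma npL_flip (l : List Bool) : npL l ↔ nnL (flip l) := by
  unfold npL nnL
  rw [flip_length]
  constructor <;> intro h j hj <;> have := h j hj <;> rw [SL_flip] at * <;> omega

lemma excL_flip (l : List Bool) : excL l ↔ excL (flip l) := by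
  unfold excL
  rw [flip_length, ht_flip]
  constructor <;> rintro ⟨h1, h2⟩ <;> refine ⟨by omega, fun j hj => ?_⟩ <;>
    have := h2 j hj <;> rw [SL_flip] at * <;> omega

lemma sum_flip (f g : List Bool → ℝ) (n : ℕ) (h : ∀ l, l.length = n → f (flip l) = g l) :
    ∑ l ∈ L n, f l = ∑ l ∈ L n, g l := by
  apply Finset.sum_nbij' (i := flip) (j := flip)
  · intro l hl; rw [mem_L] at *; simp [hl]
  · intro l hl; rw [mem_L] at *; simp [hl]
  · intro l _; simp
  · intro l _; simp
  · intro l hl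
    rw [mem_L] at hl
    rw [← h (flip l) (by simp [hl]), flip_flip]

lemma NN_eq_PP (p : ℝ) (m : ℕ) : NN p m = PP (1 - p) m := by
  unfold NN PP
  apply sum_flip
  intro l hl
  rw [wt_flip]
  by_cases h : nnL l
  · rw [if_pos h, if_pos ((npL_flip (flip l)).2 (by rwa [flip_flip]))]
  · rw [if_neg h, if_neg (fun hc => h (by have := (npL_flip (flip l)).1 hc; rwa [flip_flip] at this))]

lemma En_eq_Ep (p : ℝ) (r : ℕ) : En p r = Ep (1 - p) r := by
  unfold En Ep
  apply sum_flip
  intro l hl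
  rw [wt_flip]
  have hiff : (excL (flip l) ∧ npL (flip l)) ↔ (excL l ∧ nnL l) := by
    rw [show npL (flip l) ↔ nnL l from by rw [npL_flip, flip_flip], ← excL_flip]
  exact if_congr hiff rfl rfl


/-! ### Excursions -/

lemma excL_even {l : List Bool} (h : excL l) : Even l.length := by
  have := SL_parity l (le_refl l.length)
  rw [SL_len, h.1, zero_add] at this
  exact_mod_cast this

lemma Ep_odd (p : ℝ) {r : ℕ} (hr : ¬ Even r) : Ep p r = 0 := by
  apply Finset.sum_eq_zero
  intro l hl
  rw [mem_L] at hl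
  rw [if_neg]
  rintro ⟨he, -⟩
  exact hr (hl ▸ excL_even he)

lemma En_odd (p : ℝ) {r : ℕ} (hr : ¬ Even r) : En p r = 0 := by
  rw [En_eq_Ep]; exact Ep_odd _ hr

lemma exc_nn_or_np {e : List Bool} (h1 : 1 ≤ e.length) (he : excL e) :
    nnL e ∨ npL e := by
  have hlen2 : 2 ≤ e.length := by
    by_contra hc
    have hl1 : e.length = 1 := by omega
    rcases SL_one h1 with h | h <;> · rw [← hl1, SL_len, he.1] at h; omega
  have hnz : ∀ j, 1 ≤ j → j ≤ e.length - 1 → SL e j ≠ 0 := by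
    intro j hj1 hj2
    exact he.2 j (Finset.mem_Ico.2 ⟨hj1, by omega⟩)
  rcases SL_one h1 with h | h
  · left
    have hpos := pos_of_no_zero (by omega : e.length - 1 ≤ e.length) hnz (by omega)
    intro j hj
    rw [Finset.mem_Icc] at hj
    rcases Nat.lt_or_ge j e.length with hc | hc
    · exact le_of_lt (hpos j hj.1 (by omega))
    · have : j = e.length := by omega
      rw [this, SL_len, he.1]
  · right
    have hneg := neg_of_no_zero (by omega : e.length - 1 ≤ e.length) hnz (by omega)
    intro j hj
    rw [Finset.mem_Icc] at hj
    rcases Nat.lt_or_ge j e.length with hc | hc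
    · exact le_of_lt (hneg j hj.1 (by omega))
    · have : j = e.length := by omega
      rw [this, SL_len, he.1]

lemma not_nn_np {e : List Bool} (h1 : 1 ≤ e.length) : ¬ (nnL e ∧ npL e) := by
  rintro ⟨hn, hp⟩
  have h2 := hn 1 (Finset.mem_Icc.2 ⟨le_refl 1, h1⟩)
  have h3 := hp 1 (Finset.mem_Icc.2 ⟨le_refl 1, h1⟩)
  rcases SL_one h1 with h | h <;> omega

/-! ### First return time -/

def frt (l : List Bool) : ℕ :=
  if H : ∃ j, j < l.length + 1 ∧ 1 ≤ j ∧ SL l j = 0 then Nat.find H else l.length + 1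

lemma frt_eq_iff {l : List Bool} {r : ℕ} (hr1 : 1 ≤ r) (hrl : r ≤ l.length) :
    frt l = r ↔ (SL l r = 0 ∧ ∀ j, 1 ≤ j → j < r → SL l j ≠ 0) := by
  unfold frt
  split_ifs with H
  · rw [Nat.find_eq_iff H]
    constructor
    · rintro ⟨⟨-, -, h0⟩, hmin⟩
      refine ⟨h0, fun j hj1 hjr hc => hmin j hjr ⟨by omega, hj1, hc⟩⟩
    · rintro ⟨h0, hmin⟩
      exact ⟨⟨by omega, hr1, h0⟩, fun j hjr ⟨_, hj1, hc⟩ => hmin j hj1 hjr hc⟩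
  · push_neg at H
    constructor
    · intro h; omega
    · rintro ⟨h0, -⟩
      exact absurd h0 (H r (by omega) hr1)

lemma frt_eq_top_iff {l : List Bool} :
    frt l = l.length + 1 ↔ ∀ j, 1 ≤ j → j ≤ l.length → SL l j ≠ 0 := by
  unfold frt
  split_ifs with H
  · obtain ⟨h1, h2, h3⟩ := Nat.find_spec H
    constructor
    · intro h; omega
    · intro h
      exact absurd h3 (h _ h2 (by omega))
  · push_neg at H
    refine ⟨fun _ j hj1 hj2 => ?_, fun _ => rfl⟩
    exact H j (by omega) hj1

lemma frt_mem {l : List Bool} : frt l ∈ Icc 1 (l.length + 1) := by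
  rw [Finset.mem_Icc]
  unfold frt
  split_ifs with H
  · obtain ⟨h1, h2, -⟩ := Nat.find_spec H
    omega
  · omega


lemma frt_append_eq {e m : List Bool} {r : ℕ} (hr1 : 1 ≤ r) (hle : e.length = r) :
    frt (e ++ m) = r ↔ excL e := by
  rw [frt_eq_iff hr1 (by rw [List.length_append]; omega)]
  unfold excL
  rw [SL_append_left m (by omega), ← hle, SL_len]
  constructor
  · rintro ⟨h0, hmin⟩
    refine ⟨h0, fun j hj => ?_⟩
    rw [Finset.mem_Ico] at hj
    have := hmin j hj.1 (by omega)
    rwa [SL_append_left m (by omega)] at this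
  · rintro ⟨h0, hmin⟩
    refine ⟨h0, fun j hj1 hjr => ?_⟩
    rw [SL_append_left m (by omega)]
    exact hmin j (Finset.mem_Ico.2 ⟨hj1, by omega⟩)

lemma sum_prod_split (r s : ℕ) (f f' g g' : List Bool → ℝ) :
    ∑ e ∈ L r, ∑ m ∈ L s, (f e * g m + f' e * g' m)
      = (∑ e ∈ L r, f e) * (∑ m ∈ L s, g m) + (∑ e ∈ L r, f' e) * (∑ m ∈ L s, g' m) := by
  have h1 : ∀ e, ∑ m ∈ L s, (f e * g m + f' e * g' m)
      = f e * (∑ m ∈ L s, g m) + f' e * (∑ m ∈ L s, g' m) := by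
    intro e
    rw [Finset.sum_add_distrib, Finset.mul_sum, Finset.mul_sum]
  calc ∑ e ∈ L r, ∑ m ∈ L s, (f e * g m + f' e * g' m)
      = ∑ e ∈ L r, (f e * (∑ m ∈ L s, g m) + f' e * (∑ m ∈ L s, g' m)) :=
        Finset.sum_congr rfl (fun e _ => h1 e)
    _ = _ := by rw [Finset.sum_add_distrib, ← Finset.sum_mul, ← Finset.sum_mul]

lemma fiber_eq (p : ℝ) (n k r : ℕ) (hr1 : 1 ≤ r) (hrn : r ≤ n) :
    ∑ l ∈ L n, (if TL l = k ∧ frt l = r then wt p l else 0)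
    = Ep p r * (∑ m ∈ L (n - r), if r + TL m = k then wt p m else 0)
      + En p r * A p (n - r) k := by
  obtain ⟨s, rfl⟩ : ∃ s, n = r + s := ⟨n - r, by omega⟩
  have hs : r + s - r = s := by omega
  rw [hs, sum_split, A, Ep, En]
  rw [← sum_prod_split r s (fun e => if excL e ∧ nnL e then wt p e else 0)
      (fun e => if excL e ∧ npL e then wt p e else 0)
      (fun m => if r + TL m = k then wt p m else 0)
      (fun m => if TL m = k then wt p m else 0)]
  apply Finset.sum_congr rfl
  intro e he
  apply Finset.sum_congr rfl
  intro m hm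
  rw [mem_L] at he hm
  have hfrt : frt (e ++ m) = r ↔ excL e := frt_append_eq hr1 he
  by_cases hexc : excL e
  · have h1e : 1 ≤ e.length := by omega
    have hTap : TL (e ++ m) = TL e + TL m := TL_append hexc.1
    have hwap : wt p (e ++ m) = wt p e * wt p m := wt_append p e m
    rcases exc_nn_or_np h1e hexc with hnn | hnp
    · have hTe : TL e = r := by rw [← he, TL_eq_len_iff]; exact hnn
      have hnp' : ¬ (excL e ∧ npL e) := fun hc => not_nn_np h1e ⟨hnn, hc.2⟩
      by_cases hc : r + TL m = k
      · rw [if_pos (show TL (e ++ m) = k ∧ frt (e ++ m) = r from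
          ⟨by rw [hTap, hTe]; exact hc, hfrt.2 hexc⟩), if_pos (show excL e ∧ nnL e from ⟨hexc, hnn⟩), if_neg hnp',
          if_pos hc, hwap]
        ring
      · rw [if_neg (show ¬ (TL (e ++ m) = k ∧ frt (e ++ m) = r) from
          fun hcc => hc (by have h := hcc.1; rw [hTap, hTe] at h; exact h)),
          if_pos (show excL e ∧ nnL e from ⟨hexc, hnn⟩), if_neg hnp', if_neg hc]
        ring
    · have hTe : TL e = 0 := by rw [TL_eq_zero_iff]; exact hnp
      have hnn' : ¬ (excL e ∧ nnL e) := fun hc => not_nn_np h1e ⟨hc.2, hnp⟩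
      by_cases hc : TL m = k
      · rw [if_pos (show TL (e ++ m) = k ∧ frt (e ++ m) = r from
          ⟨by rw [hTap, hTe, zero_add]; exact hc, hfrt.2 hexc⟩), if_neg hnn',
          if_pos (show excL e ∧ npL e from ⟨hexc, hnp⟩), if_pos hc, hwap]
        ring
      · rw [if_neg (show ¬ (TL (e ++ m) = k ∧ frt (e ++ m) = r) from
          fun hcc => hc (by have h := hcc.1; rw [hTap, hTe, zero_add] at h; exact h)),
          if_neg hnn', if_pos (show excL e ∧ npL e from ⟨hexc, hnp⟩), if_neg hc]
        ring
  · rw [if_neg (fun hc : _ ∧ _ => hexc (hfrt.1 hc.2)),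
      if_neg (fun hc : _ ∧ _ => hexc hc.1), if_neg (fun hc : _ ∧ _ => hexc hc.1),
      zero_mul, zero_mul, add_zero]


lemma no_return_cases {l : List Bool} (h1 : 1 ≤ l.length)
    (h : ∀ j, 1 ≤ j → j ≤ l.length → SL l j ≠ 0) : TL l = l.length ∨ TL l = 0 := by
  rcases SL_one h1 with hs | hs
  · left
    rw [TL_eq_len_iff]
    intro j hj
    rw [Finset.mem_Icc] at hj
    exact le_of_lt (pos_of_no_zero (le_refl _) h (by omega) j hj.1 hj.2)
  · right
    rw [TL_eq_zero_iff]
    intro j hj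
    rw [Finset.mem_Icc] at hj
    exact le_of_lt (neg_of_no_zero (le_refl _) h (by omega) j hj.1 hj.2)

lemma A_decomp (p : ℝ) {n k : ℕ} (hk1 : 1 ≤ k) (hkn : k < n) :
    A p n k = ∑ r ∈ Icc 1 n,
      (Ep p r * (∑ m ∈ L (n - r), if r + TL m = k then wt p m else 0)
        + En p r * A p (n - r) k) := by
  have hmaps : ∀ l ∈ L n, frt l ∈ Icc 1 (n + 1) := by
    intro l hl
    have := frt_mem (l := l)
    rwa [mem_L.1 hl] at this
  have hA : A p n k = ∑ r ∈ Icc 1 (n + 1),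
      ∑ l ∈ (L n).filter (fun l => frt l = r), (if TL l = k then wt p l else 0) :=
    (Finset.sum_fiberwise_of_maps_to hmaps _).symm
  rw [hA, Finset.sum_Icc_succ_top (by omega : 1 ≤ n + 1)]
  have htop : ∑ l ∈ (L n).filter (fun l => frt l = n + 1),
      (if TL l = k then wt p l else 0) = 0 := by
    apply Finset.sum_eq_zero
    intro l hl
    rw [Finset.mem_filter] at hl
    obtain ⟨hl1, hl2⟩ := hl
    have hlen := mem_L.1 hl1
    have hnz : ∀ j, 1 ≤ j → j ≤ l.length → SL l j ≠ 0 := by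
      rw [← frt_eq_top_iff]
      omega
    rcases no_return_cases (by omega) hnz with hT | hT <;> rw [if_neg] <;> omega
  rw [htop, add_zero]
  apply Finset.sum_congr rfl
  intro r hr
  rw [Finset.mem_Icc] at hr
  rw [Finset.sum_filter, ← fiber_eq p n k r hr.1 hr.2]
  apply Finset.sum_congr rfl
  intro l _
  by_cases h1 : TL l = k <;> by_cases h2 : frt l = r <;> simp [h1, h2]

lemma wt_cons (p : ℝ) (b : Bool) (m : List Bool) : wt p (b :: m) = wB p b * wt p m := by
  simp [wt]

lemma fiber_eq_nn (p : ℝ) (k r : ℕ) (hr1 : 1 ≤ r) (hrk : r ≤ k) :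
    ∑ l ∈ L k, (if nnL l ∧ frt l = r then wt p l else 0) = Ep p r * PP p (k - r) := by
  obtain ⟨s, rfl⟩ : ∃ s, k = r + s := ⟨k - r, by omega⟩
  simp only [show r + s - r = s from by omega]
  rw [sum_split, Ep, PP, Finset.sum_mul_sum]
  apply Finset.sum_congr rfl
  intro e he
  apply Finset.sum_congr rfl
  intro m hm
  rw [mem_L] at he hm
  have hfrt : frt (e ++ m) = r ↔ excL e := frt_append_eq hr1 he
  by_cases hexc : excL e
  · have happ := nnL_append (m := m) hexc.1
    by_cases h2 : nnL e <;> by_cases h3 : nnL m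
    · rw [if_pos ⟨happ.2 ⟨h2, h3⟩, hfrt.2 hexc⟩,
        if_pos (show excL e ∧ nnL e from ⟨hexc, h2⟩), if_pos h3, wt_append]
    · rw [if_neg (show ¬ _ from fun hc => h3 (happ.1 hc.1).2),
        if_pos (show excL e ∧ nnL e from ⟨hexc, h2⟩), if_neg h3, mul_zero]
    · rw [if_neg (show ¬ _ from fun hc => h2 (happ.1 hc.1).1),
        if_neg (show ¬ (excL e ∧ nnL e) from fun hc => h2 hc.2), zero_mul]
    · rw [if_neg (show ¬ _ from fun hc => h2 (happ.1 hc.1).1),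
        if_neg (show ¬ (excL e ∧ nnL e) from fun hc => h2 hc.2), zero_mul]
  · rw [if_neg (show ¬ _ from fun hc => hexc (hfrt.1 hc.2)),
      if_neg (show ¬ (excL e ∧ nnL e) from fun hc => hexc hc.1), zero_mul]

lemma Gp_eq (p : ℝ) {k : ℕ} (hk1 : 1 ≤ k) :
    ∑ l ∈ L k, (if nnL l ∧ frt l = k + 1 then wt p l else 0) = p * PP p (k - 1) := by
  have hpt : ∀ l ∈ L k, (if nnL l ∧ frt l = k + 1 then wt p l else 0)
      = (if posL l then wt p l else 0) := by
    intro l hl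
    have hlen := mem_L.1 hl
    have htop : frt l = k + 1 ↔ ∀ j, 1 ≤ j → j ≤ l.length → SL l j ≠ 0 := by
      rw [← hlen, frt_eq_top_iff]
    by_cases hpos : posL l
    · rw [if_pos ?_, if_pos hpos]
      constructor
      · intro j hj
        exact le_trans (by omega) (hpos j hj)
      · rw [htop]
        intro j h1 h2
        have := hpos j (Finset.mem_Icc.2 ⟨h1, h2⟩)
        omega
    · rw [if_neg ?_, if_neg hpos]
      rintro ⟨hnn, hfr⟩
      apply hpos
      intro j hj
      have h1 := hnn j hj
      rw [Finset.mem_Icc] at hj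
      have h2 := (htop.1 hfr) j hj.1 hj.2
      omega
  rw [Finset.sum_congr rfl hpt]
  obtain ⟨s, rfl⟩ : ∃ s, k = 1 + s := ⟨k - 1, by omega⟩
  simp only [show 1 + s - 1 = s from by omega]
  rw [sum_split, sum_L_one]
  have h1 : ∀ m ∈ L s, (if posL ([true] ++ m) then wt p ([true] ++ m) else 0)
      = p * (if nnL m then wt p m else 0) := by
    intro m _
    rw [List.singleton_append, wt_cons]
    by_cases h : nnL m
    · rw [if_pos ((posL_cons true m).2 ⟨rfl, h⟩), if_pos h]
      simp [wB]
    · rw [if_neg (fun hc => h ((posL_cons true m).1 hc).2), if_neg h, mul_zero]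
  have h2 : ∀ m ∈ L s, (if posL ([false] ++ m) then wt p ([false] ++ m) else 0) = 0 := by
    intro m _
    rw [List.singleton_append]
    rw [if_neg (fun hc => by simpa using ((posL_cons false m).1 hc).1)]
  rw [Finset.sum_congr rfl h1, Finset.sum_congr rfl h2, Finset.sum_const, smul_zero, add_zero,
    ← Finset.mul_sum]
  rfl

lemma PP_decomp (p : ℝ) {k : ℕ} (hk1 : 1 ≤ k) :
    PP p k = (∑ r ∈ Icc 1 k, Ep p r * PP p (k - r)) + p * PP p (k - 1) := by
  have hmaps : ∀ l ∈ L k, frt l ∈ Icc 1 (k + 1) := by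
    intro l hl
    have := frt_mem (l := l)
    rwa [mem_L.1 hl] at this
  have hPP : PP p k = ∑ r ∈ Icc 1 (k + 1),
      ∑ l ∈ (L k).filter (fun l => frt l = r), (if nnL l then wt p l else 0) :=
    (Finset.sum_fiberwise_of_maps_to hmaps _).symm
  rw [hPP, Finset.sum_Icc_succ_top (by omega : 1 ≤ k + 1)]
  congr 1
  · apply Finset.sum_congr rfl
    intro r hr
    rw [Finset.mem_Icc] at hr
    rw [Finset.sum_filter, ← fiber_eq_nn p k r hr.1 hr.2]
    apply Finset.sum_congr rfl
    intro l _
    by_cases h1 : nnL l <;> by_cases h2 : frt l = r <;> simp [h1, h2]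
  · rw [← Gp_eq p hk1, Finset.sum_filter]
    apply Finset.sum_congr rfl
    intro l _
    by_cases h1 : nnL l <;> by_cases h2 : frt l = k + 1 <;> simp [h1, h2]

lemma PP_even (p : ℝ) {k : ℕ} (hk1 : 1 ≤ k) (hke : Even k) : PP p k = PP p (k - 1) := by
  obtain ⟨s, rfl⟩ : ∃ s, k = s + 1 := ⟨k - 1, by omega⟩
  simp only [show s + 1 - 1 = s from by omega]
  unfold PP
  rw [sum_split]
  apply Finset.sum_congr rfl
  intro l hl
  have hlen := mem_L.1 hl
  rw [sum_L_one]
  by_cases hnn : nnL l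
  · have hodd : ¬ Even s := by
      rcases hke with ⟨c, hc⟩
      rintro ⟨d, hd⟩
      omega
    have hht : 1 ≤ ht l := by
      have hpar := SL_parity l (le_refl l.length)
      rw [SL_len] at hpar
      have hge : 0 ≤ ht l := by
        have hs1 : 1 ≤ s := by
          rcases Nat.eq_zero_or_pos s with h0 | h0
          · exfalso; exact hodd (h0 ▸ Even.zero)
          · omega
        have := hnn l.length (Finset.mem_Icc.2 ⟨by omega, le_refl _⟩)
        rwa [SL_len] at this
      rcases hpar with ⟨c, hc⟩
      rcases Nat.even_or_odd s with he | ⟨d, hd⟩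
      · exact absurd he hodd
      · rw [hlen] at hc
        omega
    have ht1 : nnL (l ++ [true]) := (nnL_snoc l true).2 ⟨hnn, by simp [stp]; omega⟩
    have ht2 : nnL (l ++ [false]) := (nnL_snoc l false).2 ⟨hnn, by simp [stp]; omega⟩
    rw [if_pos ht1, if_pos ht2, if_pos hnn, wt_append, wt_append]
    have : wt p ([true]) = p := by simp [wt, wB]
    rw [this]
    have : wt p ([false]) = 1 - p := by simp [wt, wB]
    rw [this]
    ring
  · rw [if_neg hnn, if_neg (fun hc => hnn ((nnL_snoc l true).1 hc).1),
      if_neg (fun hc => hnn ((nnL_snoc l false).1 hc).1)]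
    ring

lemma NN_even (p : ℝ) {m : ℕ} (hm1 : 1 ≤ m) (hme : Even m) : NN p m = NN p (m - 1) := by
  rw [NN_eq_PP, NN_eq_PP, PP_even (1 - p) hm1 hme]

lemma NN_decomp (p : ℝ) {m : ℕ} (hm1 : 1 ≤ m) :
    NN p m = (∑ r ∈ Icc 1 m, En p r * NN p (m - r)) + (1 - p) * NN p (m - 1) := by
  rw [NN_eq_PP, PP_decomp (1 - p) hm1]
  simp only [En_eq_Ep, NN_eq_PP]

lemma A_eq_zero (p : ℝ) {n k : ℕ} (h : n < k) : A p n k = 0 := by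
  apply Finset.sum_eq_zero
  intro l hl
  rw [if_neg]
  intro hc
  have := TL_le l
  rw [mem_L.1 hl] at this
  omega

lemma A_zero_eq_NN (p : ℝ) (n : ℕ) : A p n 0 = NN p n := by
  apply Finset.sum_congr rfl
  intro l _
  exact if_congr (TL_eq_zero_iff l) rfl rfl

lemma A_len_eq_PP (p : ℝ) (n : ℕ) : A p n n = PP p n := by
  apply Finset.sum_congr rfl
  intro l hl
  rw [← mem_L.1 hl]
  exact if_congr (TL_eq_len_iff l) rfl rfl

lemma PP_zero (p : ℝ) : PP p 0 = 1 := by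
  unfold PP
  rw [L_zero, Finset.sum_singleton, if_pos]
  · simp [wt]
  · intro j hj
    simp at hj

lemma NN_zero (p : ℝ) : NN p 0 = 1 := by
  rw [NN_eq_PP, PP_zero]


lemma key (p : ℝ) (n : ℕ) : ∀ k, Even n → Even k → k ≤ n →
    A p n k = PP p k * NN p (n - k) := by
  induction n using Nat.strong_induction_on with
  | _ n IH =>
    intro k hn hk hkn
    rcases Nat.eq_zero_or_pos k with hk0 | hk0
    · subst hk0
      rw [A_zero_eq_NN, PP_zero, one_mul, Nat.sub_zero]
    rcases eq_or_lt_of_le hkn with hkn' | hkn'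
    · subst hkn'
      rw [A_len_eq_PP, Nat.sub_self, NN_zero, mul_one]
    -- main case : 0 < k < n
    rw [A_decomp p hk0 hkn']
    have hterm : ∀ r ∈ Icc 1 n,
        (Ep p r * (∑ m ∈ L (n - r), if r + TL m = k then wt p m else 0)
          + En p r * A p (n - r) k)
        = (if r ≤ k then Ep p r * PP p (k - r) else 0) * NN p (n - k)
          + (if r ≤ n - k then En p r * NN p (n - k - r) else 0) * PP p k := by
      intro r hr
      rw [Finset.mem_Icc] at hr
      by_cases hre : Even r
      · have hB : (∑ m ∈ L (n - r), if r + TL m = k then wt p m else 0)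
            = if r ≤ k then A p (n - r) (k - r) else 0 := by
          by_cases hrk : r ≤ k
          · rw [if_pos hrk]
            apply Finset.sum_congr rfl
            intro m _
            exact if_congr ⟨fun h => by omega, fun h => by omega⟩ rfl rfl
          · rw [if_neg hrk]
            apply Finset.sum_eq_zero
            intro m _
            rw [if_neg (by omega)]
        rw [hB]
        have hEvnr : Even (n - r) := (Nat.even_sub (by omega)).2 (iff_of_true hn hre)
        by_cases hrk : r ≤ k
        · have hIH1 : A p (n - r) (k - r) = PP p (k - r) * NN p (n - k) := by
            have := IH (n - r) (by omega) (k - r) hEvnr ((Nat.even_sub (by omega)).2 (iff_of_true hk hre)) (by omega)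
            rwa [show n - r - (k - r) = n - k from by omega] at this
          by_cases hrnk : r ≤ n - k
          · have hIH2 : A p (n - r) k = PP p k * NN p (n - k - r) := by
              have := IH (n - r) (by omega) k hEvnr hk (by omega)
              rwa [show n - r - k = n - k - r from by omega] at this
            simp only [if_pos hrk, if_pos hrnk, hIH1, hIH2]
            ring
          · have hz : A p (n - r) k = 0 := A_eq_zero p (by omega)
            simp only [if_pos hrk, if_neg hrnk, hIH1, hz]
            ring
        · by_cases hrnk : r ≤ n - k
          · have hIH2 : A p (n - r) k = PP p k * NN p (n - k - r) := by
              have := IH (n - r) (by omega) k hEvnr hk (by omega)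
              rwa [show n - r - k = n - k - r from by omega] at this
            simp only [if_neg hrk, if_pos hrnk, hIH2]
            ring
          · have hz : A p (n - r) k = 0 := A_eq_zero p (by omega)
            simp only [if_neg hrk, if_neg hrnk, hz]
            ring
      · rw [Ep_odd p hre, En_odd p hre]
        by_cases h1 : r ≤ k <;> by_cases h2 : r ≤ n - k <;> simp [h1, h2]
    rw [Finset.sum_congr rfl hterm, Finset.sum_add_distrib, ← Finset.sum_mul, ← Finset.sum_mul]
    have hS1 : ∑ r ∈ Icc 1 n, (if r ≤ k then Ep p r * PP p (k - r) else 0)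
        = ∑ r ∈ Icc 1 k, Ep p r * PP p (k - r) := by
      rw [← Finset.sum_subset (Finset.Icc_subset_Icc_right hkn)]
      · apply Finset.sum_congr rfl
        intro r hr
        rw [Finset.mem_Icc] at hr
        rw [if_pos hr.2]
      · intro r hr hnr
        rw [Finset.mem_Icc] at hr hnr
        rw [if_neg (by omega)]
    have hS2 : ∑ r ∈ Icc 1 n, (if r ≤ n - k then En p r * NN p (n - k - r) else 0)
        = ∑ r ∈ Icc 1 (n - k), En p r * NN p (n - k - r) := by
      rw [← Finset.sum_subset (Finset.Icc_subset_Icc_right (by omega : n - k ≤ n))]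
      · apply Finset.sum_congr rfl
        intro r hr
        rw [Finset.mem_Icc] at hr
        rw [if_pos hr.2]
      · intro r hr hnr
        rw [Finset.mem_Icc] at hr hnr
        rw [if_neg (by omega)]
    rw [hS1, hS2]
    have hPk : ∑ r ∈ Icc 1 k, Ep p r * PP p (k - r) = (1 - p) * PP p k := by
      have hdec := PP_decomp p hk0
      rw [PP_even p hk0 hk] at hdec
      rw [PP_even p hk0 hk]
      linarith
    have hNk : ∑ r ∈ Icc 1 (n - k), En p r * NN p (n - k - r) = p * NN p (n - k) := by
      have h1nk : 1 ≤ n - k := by omega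
      have hdec := NN_decomp p h1nk
      rw [NN_even p h1nk ((Nat.even_sub (by omega)).2 (iff_of_true hn hk))] at hdec
      rw [NN_even p h1nk ((Nat.even_sub (by omega)).2 (iff_of_true hn hk))]
      linarith
    rw [hPk, hNk]
    ring


lemma stp_inj {b1 b2 : Bool} (h : stp b1 = stp b2) : b1 = b2 := by
  rcases b1 <;> rcases b2 <;> simp [stp] at h ⊢ <;> omega

lemma wB_nonneg {p : ℝ} (hp0 : 0 < p) (hp1 : p < 1) (b : Bool) : 0 ≤ wB p b := by
  rcases b <;> simp [wB] <;> linarith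

lemma bridge {Ω : Type*} [MeasurableSpace Ω] (μ : Measure Ω)
    [IsProbabilityMeasure μ]
    (p : ℝ) (hp0 : 0 < p) (hp1 : p < 1)
    (X : ℕ → Ω → ℤ) (hmeas : ∀ i, Measurable (X i))
    (hindep : iIndepFun X μ)
    (hX1 : ∀ i, μ {ω | X i ω = 1} = ENNReal.ofReal p)
    (hX2 : ∀ i, μ {ω | X i ω = -1} = ENNReal.ofReal (1 - p))
    (S : ℕ → Ω → ℤ) (hS : ∀ n ω, S n ω = ∑ i ∈ Finset.range n, X i ω)
    (T : ℕ → Ω → ℕ)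
    (hT : ∀ n ω, T n ω = ∑ j ∈ Finset.Icc 1 n,
        (if 0 < S j ω ∨ (S j ω = 0 ∧ 0 < S (j - 1) ω) then 1 else 0))
    (n k : ℕ) :
    (μ {ω | T n ω = k}).toReal = A p n k := by
  classical
  -- basic measures
  have hwE : ∀ (i : ℕ) (b : Bool),
      μ (X i ⁻¹' {stp b}) = ENNReal.ofReal (wB p b) := by
    intro i b
    have h1 : X i ⁻¹' {stp b} = {ω | X i ω = stp b} := by
      ext ω; simp [Set.mem_preimage]
    rcases b
    · rw [h1]; simpa [stp, wB] using hX2 i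
    · rw [h1]; simpa [stp, wB] using hX1 i
  -- cylinder measure, ℕ-indexed
  have hCylN : ∀ (v : ℕ → Bool), μ (⋂ i ∈ Finset.range n, X i ⁻¹' {stp (v i)})
      = ∏ i ∈ Finset.range n, ENNReal.ofReal (wB p (v i)) := by
    intro v
    rw [hindep.meas_biInter (fun i _ => ?_)]
    · exact Finset.prod_congr rfl (fun i _ => hwE i (v i))
    · rw [MeasurableSpace.measurableSet_comap]
      exact ⟨{stp (v i)}, measurableSet_singleton _, rfl⟩
  -- bad set is null
  have hGd : μ (⋃ i, ({ω | X i ω = 1} ∪ {ω | X i ω = -1})ᶜ) = 0 := by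
    apply measure_iUnion_null
    intro i
    have hm1 : MeasurableSet {ω | X i ω = 1} := hmeas i (measurableSet_singleton 1)
    have hm2 : MeasurableSet {ω | X i ω = -1} := hmeas i (measurableSet_singleton (-1))
    have hdisj : Disjoint {ω | X i ω = 1} {ω | X i ω = -1} := by
      rw [Set.disjoint_left]
      intro ω h1 h2
      simp only [Set.mem_setOf_eq] at h1 h2
      omega
    have hone : μ ({ω | X i ω = 1} ∪ {ω | X i ω = -1}) = 1 := by
      rw [measure_union hdisj hm2, hX1 i, hX2 i,
        ← ENNReal.ofReal_add (by linarith) (by linarith)]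
      norm_num
    exact (prob_compl_eq_zero_iff (hm1.union hm2)).2 hone
  -- cylinders over Fin n
  set C : (Fin n → Bool) → Set Ω :=
    fun ε => {ω | ∀ i : Fin n, X i.val ω = stp (ε i)} with hCdef
  have hCeq : ∀ ε : Fin n → Bool,
      C ε = ⋂ i ∈ Finset.range n, X i ⁻¹' {stp (if h : i < n then ε ⟨i, h⟩ else true)} := by
    intro ε
    ext ω
    simp only [hCdef, Set.mem_setOf_eq, Set.mem_iInter, Finset.mem_range, Set.mem_preimage,
      Set.mem_singleton_iff]
    constructor
    · intro h i hi
      rw [dif_pos hi]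
      exact h ⟨i, hi⟩
    · intro h i
      have := h i.val i.isLt
      rwa [dif_pos i.isLt] at this
  have hCmeas : ∀ ε, MeasurableSet (C ε) := by
    intro ε
    rw [hCeq]
    exact Finset.measurableSet_biInter _ (fun i _ => hmeas i (measurableSet_singleton _))
  have hCval : ∀ ε : Fin n → Bool, μ (C ε) = ∏ i : Fin n, ENNReal.ofReal (wB p (ε i)) := by
    intro ε
    rw [hCeq, hCylN]
    rw [← Fin.prod_univ_eq_prod_range (fun i => ENNReal.ofReal (wB p (if h : i < n then ε ⟨i, h⟩ else true))) n]
    exact Finset.prod_congr rfl (fun i _ => by rw [dif_pos i.isLt])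
  -- determinism of T on cylinders
  have hTeq : ∀ (ε : Fin n → Bool) (ω : Ω), ω ∈ C ε → T n ω = TL (List.ofFn ε) := by
    intro ε ω hω
    simp only [hCdef, Set.mem_setOf_eq] at hω
    have hSL : ∀ j, j ≤ n → S j ω = SL (List.ofFn ε) j := by
      intro j hj
      induction j with
      | zero => rw [hS]; simp [SL_zero]
      | succ i ih =>
        have hi : i < n := by omega
        have h1 : S (i+1) ω = S i ω + X i ω := by
          rw [hS, hS, Finset.sum_range_succ]
        have h2 := SL_succ (List.ofFn ε) (show i < (List.ofFn ε).length by
          rw [List.length_ofFn]; omega)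
        rw [h1, ih (by omega), h2]
        congr 1
        rw [List.get_ofFn]
        exact hω ⟨i, hi⟩
    rw [hT]
    unfold TL
    rw [List.length_ofFn]
    apply Finset.sum_congr rfl
    intro j hj
    rw [Finset.mem_Icc] at hj
    have e1 : S j ω = SL (List.ofFn ε) j := hSL j hj.2
    have e2 : S (j-1) ω = SL (List.ofFn ε) (j-1) := hSL (j-1) (by omega)
    exact if_congr (by rw [e1, e2]; exact Iff.rfl) rfl rfl
  -- the main partition
  set F : Finset (Fin n → Bool) :=
    Finset.univ.filter (fun ε => TL (List.ofFn ε) = k) with hFdef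
  have hdisjC : (↑F : Set (Fin n → Bool)).PairwiseDisjoint C := by
    intro a _ b _ hab
    rw [Function.onFun, Set.disjoint_left]
    intro ω ha hb
    apply hab
    funext i
    exact stp_inj ((ha i).symm.trans (hb i))
  have hμU : μ (⋃ ε ∈ F, C ε) = ∑ ε ∈ F, μ (C ε) :=
    measure_biUnion_finset hdisjC (fun ε _ => hCmeas ε)
  have hsub1 : (⋃ ε ∈ F, C ε) ⊆ {ω | T n ω = k} := by
    intro ω hω
    rw [Set.mem_iUnion₂] at hω
    obtain ⟨ε, hεF, hωC⟩ := hω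
    have := hTeq ε ω hωC
    rw [hFdef, Finset.mem_filter] at hεF
    rw [Set.mem_setOf_eq, this, hεF.2]
  have hsub2 : {ω | T n ω = k} ⊆
      (⋃ ε ∈ F, C ε) ∪ (⋃ i, ({ω | X i ω = 1} ∪ {ω | X i ω = -1})ᶜ) := by
    intro ω hω
    by_cases hg : ω ∈ ⋃ i, ({ω | X i ω = 1} ∪ {ω | X i ω = -1})ᶜ
    · exact Or.inr hg
    · left
      simp only [Set.mem_iUnion, Set.mem_compl_iff, not_exists, not_not] at hg
      have hg' : ∀ i, X i ω = 1 ∨ X i ω = -1 := by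
        intro i
        have := hg i
        simpa [Set.mem_union, Set.mem_setOf_eq] using this
      set ε : Fin n → Bool := fun i => decide (X i.val ω = 1) with hεdef
      have hωC : ω ∈ C ε := by
        intro i
        rcases hg' i.val with h1 | h1
        · have : ε i = true := by simp [hεdef, h1]
          rw [this, h1]; rfl
        · have : ε i = false := by simp [hεdef, h1]
          rw [this, h1]; rfl
      have hεF : ε ∈ F := by
        rw [hFdef, Finset.mem_filter]
        exact ⟨Finset.mem_univ _, by rw [← hTeq ε ω hωC]; exact hω⟩
      exact Set.mem_biUnion hεF hωC
  have hμT : μ {ω | T n ω = k} = ∑ ε ∈ F, μ (C ε) := by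
    apply le_antisymm
    · calc μ {ω | T n ω = k}
          ≤ μ ((⋃ ε ∈ F, C ε) ∪ (⋃ i, ({ω | X i ω = 1} ∪ {ω | X i ω = -1})ᶜ)) :=
            measure_mono hsub2
        _ ≤ μ (⋃ ε ∈ F, C ε) + μ (⋃ i, ({ω | X i ω = 1} ∪ {ω | X i ω = -1})ᶜ) :=
            measure_union_le _ _
        _ = ∑ ε ∈ F, μ (C ε) := by rw [hGd, add_zero, hμU]
    · rw [← hμU]
      exact measure_mono hsub1
  -- convert to reals
  rw [hμT]
  have hne : ∀ ε ∈ F, μ (C ε) ≠ ⊤ := fun ε _ => (measure_ne_top μ _)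
  rw [ENNReal.toReal_sum hne]
  have hterm : ∀ ε ∈ F, (μ (C ε)).toReal = ∏ i : Fin n, wB p (ε i) := by
    intro ε _
    rw [hCval, ENNReal.toReal_prod]
    exact Finset.prod_congr rfl
      (fun i _ => ENNReal.toReal_ofReal (wB_nonneg hp0 hp1 (ε i)))
  rw [Finset.sum_congr rfl hterm]
  -- identify with A
  unfold A L
  rw [Finset.sum_image (fun x _ y _ h => List.ofFn_injective h)]
  rw [hFdef, Finset.sum_filter]
  apply Finset.sum_congr rfl
  intro ε _
  by_cases h : TL (List.ofFn ε) = k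
  · rw [if_pos h, if_pos h]
    unfold wt
    rw [List.map_ofFn, List.prod_ofFn]
    rfl
  · rw [if_neg h, if_neg h]

end CF

theorem sojourn_product {Ω : Type*} [MeasurableSpace Ω] (μ : Measure Ω)
    [IsProbabilityMeasure μ]
    (p : ℝ) (hp0 : 0 < p) (hp1 : p < 1)
    (X : ℕ → Ω → ℤ) (hmeas : ∀ i, Measurable (X i))
    (hindep : iIndepFun X μ)
    (hX1 : ∀ i, μ {ω | X i ω = 1} = ENNReal.ofReal p)
    (hX2 : ∀ i, μ {ω | X i ω = -1} = ENNReal.ofReal (1 - p))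
    (S : ℕ → Ω → ℤ) (hS : ∀ n ω, S n ω = ∑ i ∈ Finset.range n, X i ω)
    (T : ℕ → Ω → ℕ)
    (hT : ∀ n ω, T n ω = ∑ j ∈ Finset.Icc 1 n,
        (if 0 < S j ω ∨ (S j ω = 0 ∧ 0 < S (j - 1) ω) then 1 else 0))
    (n k : ℕ) (hn : Even n) (hk : Even k) (hkn : k ≤ n)
    :
    (μ {ω | T n ω = k}).toReal
      = (μ {ω | T k ω = k}).toReal * (μ {ω | T (n - k) ω = 0}).toReal := by
  rw [CF.bridge μ p hp0 hp1 X hmeas hindep hX1 hX2 S hS T hT n k,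
      CF.bridge μ p hp0 hp1 X hmeas hindep hX1 hX2 S hS T hT k k,
      CF.bridge μ p hp0 hp1 X hmeas hindep hX1 hX2 S hS T hT (n - k) 0,
      CF.key p n k hn hk hkn, CF.A_len_eq_PP, CF.A_zero_eq_NN]
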